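/- The group of all bijections f : V → V satisfying dist (f a) (f b) = dist a b for all a, b ∈ V (the isometry group of the 10-point metric space V with the metric induced from EuclideanSpace ℝ (Fin 5)) is isomorphic to Equiv.Perm (Fin 5), the symmetric group on five elements. (The symmetry group of the rectified 5-cell is 𝔖₅.) -/

import Mathlib

noncomputable section

/-- The vertex set of the Euclidean rectified 5-cell: all coordinate
permutations of the point `(1,1,1,0,0)`. -/
def V : Set (EuclideanSpace ℝ (Fin 5)) :=
  {x | (∀ i, x i = 0 ∨ x i = 1) ∧ (∑ i, x i) = 3}

/-- The group of all bijections of `V` that preserve the distance induced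
from `EuclideanSpace ℝ (Fin 5)`: the isometry group of the 10-point metric
space `V`. -/
def symmGroup : Subgroup (Equiv.Perm ↥V) where
  carrier := {f | ∀ a b : ↥V, dist (f a) (f b) = dist a b}
  one_mem' := fun _ _ => rfl
  mul_mem' := by
    intro f g hf hg a b
    simpa [Equiv.Perm.mul_apply] using (hf (g a) (g b)).trans (hg a b)
  inv_mem' := by
    intro f hf a b
    have h := hf (f⁻¹ a) (f⁻¹ b)
    have hfi : ∀ x, f (f⁻¹ x) = x := fun x => (Equiv.eq_symm_apply f).mp rfl
    rw [hfi, hfi] at h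
    exact h.symm

open Finset

/-! ### Encoding vertices as 3-element subsets of `Fin 5` -/

open Classical in
/-- The support of a vertex. -/
def enc (x : V) : Finset (Fin 5) := Finset.univ.filter (fun i => x.1 i = 1)

lemma mem_enc {x : V} {i : Fin 5} : i ∈ enc x ↔ x.1 i = 1 := by
  classical
  simp [enc]

lemma coord_eq (x : V) (i : Fin 5) : x.1 i = if i ∈ enc x then 1 else 0 := by
  rcases x.2.1 i with h | h
  · simp [mem_enc, h]
  · simp [mem_enc, h]

lemma enc_injective : Function.Injective enc := by
  intro x y h
  apply Subtype.ext
  ext i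
  rw [coord_eq x i, coord_eq y i, h]

lemma card_enc (x : V) : (enc x).card = 3 := by
  have hsum : (∑ i, x.1 i) = 3 := x.2.2
  have h1 : (∑ i, x.1 i) = ∑ i, (if i ∈ enc x then (1 : ℝ) else 0) :=
    Finset.sum_congr rfl (fun i _ => coord_eq x i)
  have h2 : (∑ i, (if i ∈ enc x then (1 : ℝ) else 0)) = (enc x).card := by
    rw [Finset.sum_ite_mem, Finset.univ_inter, Finset.sum_const]
    simp
  have : ((enc x).card : ℝ) = 3 := by rw [← h2, ← h1, hsum]
  exact_mod_cast this

/-- Build a vertex from a 3-element subset. -/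
def mk3 (s : Finset (Fin 5)) (hs : s.card = 3) : V :=
  ⟨WithLp.toLp 2 (fun i => if i ∈ s then (1:ℝ) else 0), by
    constructor
    · intro i; by_cases hi : i ∈ s <;> simp [hi]
    · have : (∑ i, (if i ∈ s then (1 : ℝ) else 0)) = s.card := by
        rw [Finset.sum_ite_mem, Finset.univ_inter, Finset.sum_const]
        simp
      change (∑ i, (if i ∈ s then (1:ℝ) else 0)) = 3
      rw [show (∑ i, (if i ∈ s then (1:ℝ) else 0)) = _ from this, hs]
      norm_num⟩

lemma enc_mk3 (s : Finset (Fin 5)) (hs : s.card = 3) : enc (mk3 s hs) = s := by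
  ext i
  rw [mem_enc]
  show (if i ∈ s then (1:ℝ) else 0) = 1 ↔ i ∈ s
  by_cases hi : i ∈ s <;> simp [hi]

/-! ### The distance in terms of the encoding -/

/-- Hamming distance (squared euclidean distance). -/
def Hd (x y : V) : ℕ := (symmDiff (enc x) (enc y)).card

lemma dist_eq_Hd (x y : V) : dist x y = Real.sqrt (Hd x y) := by
  rw [Subtype.dist_eq, EuclideanSpace.dist_eq]
  congr 1
  have h1 : ∀ i : Fin 5, dist (x.1 i) (y.1 i) ^ 2
      = (if i ∈ symmDiff (enc x) (enc y) then (1:ℝ) else 0) := by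
    intro i
    rw [Real.dist_eq, sq_abs, coord_eq x i, coord_eq y i]
    by_cases hx : i ∈ enc x <;> by_cases hy : i ∈ enc y <;>
      simp [Finset.mem_symmDiff, hx, hy]
  calc (∑ i, dist (x.1 i) (y.1 i) ^ 2)
      = ∑ i, (if i ∈ symmDiff (enc x) (enc y) then (1:ℝ) else 0) :=
        Finset.sum_congr rfl (fun i _ => h1 i)
    _ = ((symmDiff (enc x) (enc y)).card : ℝ) := by
        rw [Finset.sum_ite_mem, Finset.univ_inter, Finset.sum_const]
        simp
    _ = (Hd x y : ℝ) := rfl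

lemma dist_eq_iff {a b c d : V} : dist a b = dist c d ↔ Hd a b = Hd c d := by
  rw [dist_eq_Hd, dist_eq_Hd]
  rw [Real.sqrt_inj (Nat.cast_nonneg _) (Nat.cast_nonneg _)]
  exact Nat.cast_inj

/-! ### The action of permutations of coordinates -/

/-- Coordinate permutation action on `V`. -/
def actV (σ : Equiv.Perm (Fin 5)) (x : V) : V :=
  ⟨WithLp.toLp 2 (fun i => x.1 (σ.symm i)), by
    constructor
    · intro i; exact x.2.1 (σ.symm i)
    · change (∑ i, x.1 (σ.symm i)) = 3
      rw [show (∑ i, x.1 (σ.symm i)) = ∑ i, x.1 i from Equiv.sum_comp σ.symm x.1]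
      exact x.2.2⟩

lemma enc_actV (σ : Equiv.Perm (Fin 5)) (x : V) :
    enc (actV σ x) = (enc x).image σ := by
  ext i
  rw [mem_enc, Finset.mem_image]
  constructor
  · intro h
    exact ⟨σ.symm i, mem_enc.2 h, σ.apply_symm_apply i⟩
  · rintro ⟨j, hj, rfl⟩
    show x.1 (σ.symm (σ j)) = 1
    rw [σ.symm_apply_apply]
    exact mem_enc.1 hj

lemma Hd_actV (σ : Equiv.Perm (Fin 5)) (x y : V) :
    Hd (actV σ x) (actV σ y) = Hd x y := by
  unfold Hd
  rw [enc_actV, enc_actV, ← Finset.image_symmDiff _ _ σ.injective,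
    Finset.card_image_of_injective _ σ.injective]

/-- The coordinate-permutation element of the symmetry group. -/
def permV (σ : Equiv.Perm (Fin 5)) : Equiv.Perm ↥V where
  toFun := actV σ
  invFun := actV σ⁻¹
  left_inv := by
    intro x
    apply Subtype.ext
    ext i
    show x.1 (σ.symm ((σ⁻¹).symm i)) = x.1 i
    exact congrArg x.1 (σ.symm_apply_apply i)
  right_inv := by
    intro x
    apply Subtype.ext
    ext i
    show x.1 ((σ⁻¹).symm (σ.symm i)) = x.1 i
    exact congrArg x.1 (σ.apply_symm_apply i)

lemma permV_mem (σ : Equiv.Perm (Fin 5)) : permV σ ∈ symmGroup := by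
  intro a b
  show dist (actV σ a) (actV σ b) = dist a b
  rw [dist_eq_Hd, dist_eq_Hd, Hd_actV]

/-- The homomorphism `𝔖₅ → symmGroup`. -/
def Φ : Equiv.Perm (Fin 5) →* symmGroup where
  toFun σ := ⟨permV σ, permV_mem σ⟩
  map_one' := by
    apply Subtype.ext
    apply Equiv.ext
    intro x
    apply Subtype.ext
    rfl
  map_mul' σ τ := by
    apply Subtype.ext
    apply Equiv.ext
    intro x
    apply Subtype.ext
    ext i
    show x.1 ((σ * τ).symm i) = x.1 (τ.symm (σ.symm i))
    rfl

lemma Φ_apply_1 (σ : Equiv.Perm (Fin 5)) (x : V) :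
    ((Φ σ : ↥symmGroup) : Equiv.Perm ↥V) x = actV σ x := rfl

/-! ### Decidable combinatorial facts -/

lemma inj5 : ∀ a b c d e : Fin 5, ({a,b,c,d,e} : Finset (Fin 5)).card = 5 →
    Function.Injective ![a,b,c,d,e] := by decide

lemma image_triple (g : Fin 5 → Fin 5) (i j k : Fin 5) :
    Finset.image g {i, j, k} = {g i, g j, g k} := by
  simp [Finset.image_insert]

set_option maxRecDepth 100000 in
lemma claimA : ∀ s : Finset (Fin 5), s.card = 3 →
    ∃ a b c d e : Fin 5, ({a,b,c,d,e} : Finset (Fin 5)).card = 5 ∧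
      ({a,b,c} : Finset (Fin 5)) = s := by decide

set_option synthInstance.maxSize 1000 in
set_option maxRecDepth 100000 in
lemma claimB : ∀ t : Finset (Fin 5), t.card = 3 →
    (symmDiff ({0,1,2} : Finset (Fin 5)) t).card = 2 →
    ∃ a b c d e : Fin 5, ({a,b,c,d,e} : Finset (Fin 5)).card = 5 ∧
      ({a,b,c} : Finset (Fin 5)) = {0,1,2} ∧
      ({a,b,d} : Finset (Fin 5)) = t := by decide

set_option maxRecDepth 100000 in
lemma claimC : ∀ u : Finset (Fin 5), u.card = 3 →
    (symmDiff ({0,1,2} : Finset (Fin 5)) u).card = 4 →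
    (symmDiff ({0,1,3} : Finset (Fin 5)) u).card = 2 →
    ∃ a b c d e : Fin 5, ({a,b,c,d,e} : Finset (Fin 5)).card = 5 ∧
      ({a,b,c} : Finset (Fin 5)) = {0,1,2} ∧
      ({a,b,d} : Finset (Fin 5)) = {0,1,3} ∧
      ({a,d,e} : Finset (Fin 5)) = u := by decide

set_option maxRecDepth 100000 in
lemma claim2 : ∀ s t : Finset (Fin 5), s.card = 3 → t.card = 3 →
    (symmDiff s ({0,1,2} : Finset (Fin 5))).card = (symmDiff t ({0,1,2} : Finset (Fin 5))).card →
    (symmDiff s ({0,1,3} : Finset (Fin 5))).card = (symmDiff t ({0,1,3} : Finset (Fin 5))).card →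
    (symmDiff s ({0,3,4} : Finset (Fin 5))).card = (symmDiff t ({0,3,4} : Finset (Fin 5))).card →
    s = t ∨ (s = {0,1,4} ∧ t = {0,2,3}) ∨ (s = {0,2,3} ∧ t = {0,1,4}) := by decide

lemma sep5 : ∀ i : Fin 5, ∃ s t : Finset (Fin 5),
    s.card = 3 ∧ t.card = 3 ∧ s ∩ t = {i} := by decide

/-! ### Injectivity -/

lemma Hd_def (x y : V) : Hd x y = (symmDiff (enc x) (enc y)).card := rfl

lemma image_eq_of_fix {σ : Equiv.Perm (Fin 5)} {s : Finset (Fin 5)} (hs : s.card = 3)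
    (h : actV σ (mk3 s hs) = mk3 s hs) : s.image σ = s := by
  have := congrArg enc h
  rwa [enc_actV, enc_mk3] at this

lemma Φ_injective : Function.Injective Φ := by
  rw [injective_iff_map_eq_one]
  intro σ hσ
  have hfix : ∀ x : V, actV σ x = x := by
    intro x
    exact Equiv.ext_iff.mp (congrArg Subtype.val hσ) x
  apply Equiv.ext
  intro i
  obtain ⟨s, t, hs, ht, hst⟩ := sep5 i
  have hi : i ∈ s ∩ t := by rw [hst]; exact Finset.mem_singleton_self i
  have his : σ i ∈ s := by
    rw [← image_eq_of_fix hs (hfix _)]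
    exact Finset.mem_image_of_mem σ (Finset.mem_of_mem_inter_left hi)
  have hit : σ i ∈ t := by
    rw [← image_eq_of_fix ht (hfix _)]
    exact Finset.mem_image_of_mem σ (Finset.mem_of_mem_inter_right hi)
  have hmem : σ i ∈ s ∩ t := Finset.mem_inter.2 ⟨his, hit⟩
  rw [hst, Finset.mem_singleton] at hmem
  simpa using hmem

/-! ### Surjectivity -/

/-- The base vertices. -/
def vA : V := mk3 {0,1,2} (by decide)
def vB : V := mk3 {0,1,3} (by decide)
def vE : V := mk3 {0,3,4} (by decide)
def vR : V := mk3 {1,2,3} (by decide)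

lemma enc_vA : enc vA = {0,1,2} := enc_mk3 _ _
lemma enc_vB : enc vB = {0,1,3} := enc_mk3 _ _
lemma enc_vE : enc vE = {0,3,4} := enc_mk3 _ _
lemma enc_vR : enc vR = {1,2,3} := enc_mk3 _ _

lemma Hd_of_symm (f : ↥symmGroup) : ∀ a b : V, Hd (f.1 a) (f.1 b) = Hd a b :=
  fun a b => dist_eq_iff.mp (f.2 a b)

/-- Build a permutation out of five distinct values. -/
def quint (a b c d e : Fin 5) (h : ({a,b,c,d,e} : Finset (Fin 5)).card = 5) :
    Equiv.Perm (Fin 5) :=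
  Equiv.ofBijective ![a,b,c,d,e]
    (Finite.injective_iff_bijective.mp (inj5 a b c d e h))

lemma quint_image (a b c d e : Fin 5) (h : ({a,b,c,d,e} : Finset (Fin 5)).card = 5)
    (i j k : Fin 5) :
    Finset.image (quint a b c d e h) {i, j, k}
      = {![a,b,c,d,e] i, ![a,b,c,d,e] j, ![a,b,c,d,e] k} :=
  image_triple _ i j k

lemma inv_fix (f : ↥symmGroup) {x y : V} (h : (f : Equiv.Perm ↥V) x = y) :
    ((f⁻¹ : ↥symmGroup) : Equiv.Perm ↥V) y = x := by
  have h2 : ((f⁻¹ : ↥symmGroup) : Equiv.Perm ↥V) = ((f : Equiv.Perm ↥V))⁻¹ := rfl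
  rw [h2, ← h, Equiv.Perm.inv_def, Equiv.symm_apply_apply]

lemma Φ_surjective : Function.Surjective Φ := by
  intro f
  -- Step 1 : make `vA` fixed
  obtain ⟨a1, b1, c1, d1, e1, hq1, him1⟩ := claimA (enc (f.1 vA)) (card_enc _)
  set σ1 := quint a1 b1 c1 d1 e1 hq1 with hσ1
  have hA1 : actV σ1 vA = f.1 vA := by
    apply enc_injective
    rw [enc_actV, enc_vA, hσ1, quint_image]
    exact him1
  set f1 : ↥symmGroup := (Φ σ1)⁻¹ * f with hf1
  have hf1A : f1.1 vA = vA := by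
    show ((Φ σ1)⁻¹ : ↥symmGroup).1 (f.1 vA) = vA
    exact inv_fix (Φ σ1) hA1
  -- Step 2 : make `vB` fixed, keeping `vA` fixed
  have hHAB : (symmDiff ({0,1,2} : Finset (Fin 5)) (enc (f1.1 vB))).card = 2 := by
    have h := Hd_of_symm f1 vA vB
    rw [hf1A] at h
    have h2 : Hd vA vB = 2 := by rw [Hd_def, enc_vA, enc_vB]; decide
    have h3 := h.trans h2
    rwa [Hd_def, enc_vA] at h3
  obtain ⟨a2, b2, c2, d2, e2, hq2, him2a, him2b⟩ :=
    claimB (enc (f1.1 vB)) (card_enc _) hHAB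
  set σ2 := quint a2 b2 c2 d2 e2 hq2 with hσ2
  have hA2 : actV σ2 vA = vA := by
    apply enc_injective
    rw [enc_actV, enc_vA, hσ2, quint_image]
    exact him2a
  have hB2 : actV σ2 vB = f1.1 vB := by
    apply enc_injective
    rw [enc_actV, enc_vB, hσ2, quint_image]
    exact him2b
  set f2 : ↥symmGroup := (Φ σ2)⁻¹ * f1 with hf2
  have hf2A : f2.1 vA = vA := by
    show ((Φ σ2)⁻¹ : ↥symmGroup).1 (f1.1 vA) = vA
    rw [hf1A]
    exact inv_fix (Φ σ2) hA2
  have hf2B : f2.1 vB = vB := by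
    show ((Φ σ2)⁻¹ : ↥symmGroup).1 (f1.1 vB) = vB
    exact inv_fix (Φ σ2) hB2
  -- Step 3 : make `vE` fixed, keeping `vA`, `vB` fixed
  have hHAE : (symmDiff ({0,1,2} : Finset (Fin 5)) (enc (f2.1 vE))).card = 4 := by
    have h := Hd_of_symm f2 vA vE
    rw [hf2A] at h
    have h2 : Hd vA vE = 4 := by rw [Hd_def, enc_vA, enc_vE]; decide
    have h3 := h.trans h2
    rwa [Hd_def, enc_vA] at h3
  have hHBE : (symmDiff ({0,1,3} : Finset (Fin 5)) (enc (f2.1 vE))).card = 2 := by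
    have h := Hd_of_symm f2 vB vE
    rw [hf2B] at h
    have h2 : Hd vB vE = 2 := by rw [Hd_def, enc_vB, enc_vE]; decide
    have h3 := h.trans h2
    rwa [Hd_def, enc_vB] at h3
  obtain ⟨a3, b3, c3, d3, e3, hq3, him3a, him3b, him3e⟩ :=
    claimC (enc (f2.1 vE)) (card_enc _) hHAE hHBE
  set σ3 := quint a3 b3 c3 d3 e3 hq3 with hσ3
  have hA3 : actV σ3 vA = vA := by
    apply enc_injective
    rw [enc_actV, enc_vA, hσ3, quint_image]
    exact him3a
  have hB3 : actV σ3 vB = vB := by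
    apply enc_injective
    rw [enc_actV, enc_vB, hσ3, quint_image]
    exact him3b
  have hE3 : actV σ3 vE = f2.1 vE := by
    apply enc_injective
    rw [enc_actV, enc_vE, hσ3, quint_image]
    exact him3e
  set f3 : ↥symmGroup := (Φ σ3)⁻¹ * f2 with hf3
  have hf3A : f3.1 vA = vA := by
    show ((Φ σ3)⁻¹ : ↥symmGroup).1 (f2.1 vA) = vA
    rw [hf2A]
    exact inv_fix (Φ σ3) hA3
  have hf3B : f3.1 vB = vB := by
    show ((Φ σ3)⁻¹ : ↥symmGroup).1 (f2.1 vB) = vB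
    rw [hf2B]
    exact inv_fix (Φ σ3) hB3
  have hf3E : f3.1 vE = vE := by
    show ((Φ σ3)⁻¹ : ↥symmGroup).1 (f2.1 vE) = vE
    exact inv_fix (Φ σ3) hE3
  -- Step 4 : `f3` is the identity
  have key : ∀ (X : V) (sX : Finset (Fin 5)), enc X = sX → f3.1 X = X → ∀ v : V,
      (symmDiff (enc (f3.1 v)) sX).card = (symmDiff (enc v) sX).card := by
    intro X sX hX hfX v
    have h := Hd_of_symm f3 v X
    rw [hfX] at h
    rwa [Hd_def, Hd_def, hX] at h
  have main : ∀ v : V, enc (f3.1 v) = enc v ∨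
      (enc (f3.1 v) = {0,1,4} ∧ enc v = {0,2,3}) ∨
      (enc (f3.1 v) = {0,2,3} ∧ enc v = {0,1,4}) := fun v =>
    claim2 _ _ (card_enc _) (card_enc _) (key vA _ enc_vA hf3A v)
      (key vB _ enc_vB hf3B v) (key vE _ enc_vE hf3E v)
  have hR : f3.1 vR = vR := by
    rcases main vR with h | ⟨h1, h2⟩ | ⟨h1, h2⟩
    · exact enc_injective h
    · rw [enc_vR] at h2; exact absurd h2 (by decide)
    · rw [enc_vR] at h2; exact absurd h2 (by decide)
  have hfix : ∀ v : V, f3.1 v = v := by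
    intro v
    rcases main v with h | ⟨h1, h2⟩ | ⟨h1, h2⟩
    · exact enc_injective h
    · exfalso
      have h := Hd_of_symm f3 v vR
      rw [hR, Hd_def, Hd_def, h1, h2, enc_vR] at h
      exact absurd h (by decide)
    · exfalso
      have h := Hd_of_symm f3 v vR
      rw [hR, Hd_def, Hd_def, h1, h2, enc_vR] at h
      exact absurd h (by decide)
  have hone : f3 = 1 := Subtype.ext (Equiv.ext hfix)
  rw [hf3, hf2, hf1] at hone
  refine ⟨σ1 * σ2 * σ3, ?_⟩
  have h5 : Φ σ1 * (Φ σ2 * (Φ σ3 * ((Φ σ3)⁻¹ * ((Φ σ2)⁻¹ * ((Φ σ1)⁻¹ * f)))))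
      = Φ σ1 * (Φ σ2 * (Φ σ3 * 1)) := by rw [hone]
  simp only [mul_inv_cancel_left, mul_one] at h5
  rw [map_mul, map_mul, mul_assoc]
  exact h5.symm

theorem symmGroup_iso_S5 : Nonempty (symmGroup ≃* Equiv.Perm (Fin 5)) := by
  have hb : Function.Bijective Φ := ⟨Φ_injective, Φ_surjective⟩
  exact ⟨(MulEquiv.ofBijective Φ hb).symm⟩
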